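/- Let (a,b,c) ∈ ℕ^k × ℕ^k × ℕ^k satisfy the triple matching condition with (a,b) non-repeating. Then #a + #b ≤ 2(⌊k/2⌋ + 1), where #a denotes the number of distinct values among the coordinates of a. -/

import Mathlib

/-- The cyclic list of `2k` triples
`(a₁,b₂,c₁), (a₂,b₁,c₁), (a₂,b₃,c₂), (a₃,b₂,c₂), …, (a_k,b₁,c_k), (a₁,b_k,c_k)`,
indexed by `Fin k × Bool`: position `(i, false)` carries `(aᵢ, bᵢ₊₁, cᵢ)` and
position `(i, true)` carries `(aᵢ₊₁, bᵢ, cᵢ)` (indices mod `k`). -/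
def tlist {k : ℕ} [NeZero k] (a b c : Fin k → ℕ) (q : Fin k × Bool) : ℕ × ℕ × ℕ :=
  if q.2 then (a (q.1 + 1), b q.1, c q.1) else (a q.1, b (q.1 + 1), c q.1)

/-- The triple matching condition: every triple appears an even number of times
in the list. -/
def TripleMatching {k : ℕ} [NeZero k] (a b c : Fin k → ℕ) : Prop :=
  ∀ p : ℕ × ℕ × ℕ, Even (Nat.card {q : Fin k × Bool // tlist a b c q = p})

/-- `(a,b)` is non-repeating if `(aᵢ, bᵢ) ≠ (aᵢ₊₁, bᵢ₊₁)` for all `i` (mod `k`). -/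
def NonRepeating {k : ℕ} [NeZero k] (a b : Fin k → ℕ) : Prop :=
  ∀ i : Fin k, (a i, b i) ≠ (a (i + 1), b (i + 1))

/-- `#a`, the number of distinct values among the coordinates of `a`. -/
def numDistinct {k : ℕ} (a : Fin k → ℕ) : ℕ := (Finset.univ.image a).card

open Finsupp Submodule Module Finset in
private abbrev K2 := ZMod 2
private abbrev V2 := ℕ →₀ ZMod 2

section helpers
open Finsupp Submodule Module Finset

lemma v2_add_self (w : V2) : w + w = 0 := by
  rw [← two_smul K2 w, show (2:K2) = 0 from rfl, zero_smul]

lemma v2_neg (w : V2) : -w = w :=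
  neg_eq_of_add_eq_zero_left (v2_add_self w)

lemma k2_add_self (x : K2) : x + x = 0 := by
  have : x + x = 2 * x := by ring
  rw [this, show (2:K2) = 0 from rfl, zero_mul]

lemma lemA {k : ℕ} (u v : Fin k → V2)
    (h1 : ∀ x : ℕ, ∑ i, u i x • v i = 0)
    (h2 : ∑ i, u i = 0) (h3 : ∑ i, v i = 0) :
    finrank K2 (span K2 (Set.range u)) + finrank K2 (span K2 (Set.range v)) ≤ 2 * (k / 2) := by
  classical
  rcases Nat.eq_zero_or_pos k with hk0 | hk0
  · subst hk0
    rw [Set.range_eq_empty u, Set.range_eq_empty v, span_empty, finrank_bot]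
  haveI : NeZero k := ⟨hk0.ne'⟩
  -- functional form of h1
  have hφ : ∀ φ : V2 →ₗ[K2] K2, ∑ i, φ (u i) • v i = 0 := by
    intro φ
    set S : Finset ℕ := Finset.univ.biUnion (fun i => (u i).support) with hS
    have hui : ∀ i, φ (u i) = ∑ x ∈ S, u i x * φ (Finsupp.single x 1) := by
      intro i
      have hrep : u i = ∑ x ∈ S, Finsupp.single x (u i x) := by
        ext y
        rw [Finsupp.finset_sum_apply]
        rw [Finset.sum_eq_single y]
        · simp
        · intro x2 _ hne
          rw [Finsupp.single_apply, if_neg hne]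
        · intro hy
          have hy0 : u i y = 0 := by
            by_contra hne
            exact hy (Finset.mem_biUnion.mpr ⟨i, Finset.mem_univ i,
              Finsupp.mem_support_iff.mpr hne⟩)
          simp [hy0]
      calc φ (u i) = φ (∑ x ∈ S, Finsupp.single x (u i x)) := by rw [← hrep]
        _ = ∑ x ∈ S, φ (Finsupp.single x (u i x)) := map_sum φ _ _
        _ = ∑ x ∈ S, u i x * φ (Finsupp.single x 1) := by
            refine Finset.sum_congr rfl fun x _ => ?_
            rw [show Finsupp.single x (u i x) = u i x • Finsupp.single x (1:K2) by
              rw [Finsupp.smul_single, smul_eq_mul, mul_one], map_smul, smul_eq_mul]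
    calc ∑ i, φ (u i) • v i
        = ∑ i, ∑ x ∈ S, (u i x * φ (Finsupp.single x 1)) • v i := by
          refine Finset.sum_congr rfl fun i _ => ?_
          rw [hui i, Finset.sum_smul]
      _ = ∑ x ∈ S, ∑ i, (u i x * φ (Finsupp.single x 1)) • v i := Finset.sum_comm
      _ = ∑ x ∈ S, φ (Finsupp.single x 1) • ∑ i, u i x • v i := by
          refine Finset.sum_congr rfl fun x _ => ?_
          rw [Finset.smul_sum]
          refine Finset.sum_congr rfl fun i _ => ?_
          rw [mul_comm, mul_smul]
      _ = 0 := by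
          refine Finset.sum_eq_zero fun x _ => ?_
          rw [h1 x, smul_zero]
  -- extract basis
  obtain ⟨bs, hbsub, hbspan, hbli⟩ := exists_linearIndependent K2 (Set.range u)
  have hbfin : bs.Finite := (Set.finite_range u).subset hbsub
  haveI : Fintype bs := hbfin.fintype
  set r := finrank K2 (span K2 (Set.range u)) with hrdef
  clear_value r
  have hrcard : bs.toFinset.card = r := by
    rw [hrdef, ← hbspan, finrank_span_set_eq_card hbli]
  -- choice of indices
  have hex : ∀ w ∈ bs, ∃ i, u i = w := fun w hw => hbsub hw
  let g : V2 → Fin k := fun w => if h : ∃ i, u i = w then h.choose else 0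
  have hg : ∀ w ∈ bs, u (g w) = w := by
    intro w hw
    have h : ∃ i, u i = w := hex w hw
    simp only [g, dif_pos h]
    exact h.choose_spec
  set B : Finset (Fin k) := bs.toFinset.image g with hBdef
  have hBcard : B.card = r := by
    rw [hBdef, Finset.card_image_of_injOn, hrcard]
    intro w hw w' hw' hgw
    rw [Finset.mem_coe, Set.mem_toFinset] at hw hw'
    rw [← hg w hw, ← hg w' hw', hgw]
  have hub : ∀ j ∈ B, u j ∈ bs := by
    intro j hj
    obtain ⟨w, hw, rfl⟩ := Finset.mem_image.mp hj
    rw [Set.mem_toFinset] at hw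
    rw [hg w hw]; exact hw
  have huinj : ∀ j ∈ B, ∀ j' ∈ B, u j = u j' → j = j' := by
    intro j hj j' hj' hjj
    obtain ⟨w, hw, rfl⟩ := Finset.mem_image.mp hj
    obtain ⟨w', hw', rfl⟩ := Finset.mem_image.mp hj'
    rw [Set.mem_toFinset] at hw hw'
    rw [hg w hw, hg w' hw'] at hjj
    rw [hjj]
  -- dual functionals via extended basis
  have hsub2 : bs ⊆ (show LinearIndepOn K2 id bs from hbli).extend (Set.subset_univ bs) := (show LinearIndepOn K2 id bs from hbli).subset_extend _
  let Bas := Module.Basis.extend (show LinearIndepOn K2 id bs from hbli)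
  let Ψ : Fin k → (V2 →ₗ[K2] K2) := fun j =>
    if h : u j ∈ bs then Bas.coord ⟨u j, hsub2 h⟩ else 0
  have hΨ : ∀ j ∈ B, ∀ w ∈ bs, Ψ j w = if u j = w then 1 else 0 := by
    intro j hj w hw
    have hj' : u j ∈ bs := hub j hj
    simp only [Ψ, dif_pos hj']
    have hwB : (w : V2) = Bas ⟨w, hsub2 hw⟩ := (Module.Basis.extend_apply_self (show LinearIndepOn K2 id bs from hbli) ⟨w, hsub2 hw⟩).symm
    conv_lhs => rw [hwB]
    rw [Basis.coord_apply, Basis.repr_self, Finsupp.single_apply]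
    by_cases h : u j = w
    · rw [if_pos (Subtype.ext h.symm), if_pos h]
    · rw [if_neg (fun hc => h (Subtype.ext_iff.mp hc).symm), if_neg h]
  have hΨδ : ∀ j ∈ B, ∀ i ∈ B, Ψ j (u i) = if i = j then 1 else 0 := by
    intro j hj i hi
    rw [hΨ j hj (u i) (hub i hi)]
    by_cases h : i = j
    · rw [if_pos (by rw [h]), if_pos h]
    · rw [if_neg (fun hc => h (huinj i hi j hj hc.symm)), if_neg h]
  -- K1
  have hK1 : ∀ j ∈ B, v j = ∑ i ∈ Bᶜ, Ψ j (u i) • v i := by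
    intro j hj
    have h0 := hφ (Ψ j)
    rw [← Finset.sum_add_sum_compl B (fun i => Ψ j (u i) • v i)] at h0
    have hB : ∑ i ∈ B, Ψ j (u i) • v i = v j := by
      rw [Finset.sum_eq_single j]
      · rw [hΨδ j hj j hj, if_pos rfl, one_smul]
      · intro i hi hne
        rw [hΨδ j hj i hi, if_neg hne, zero_smul]
      · intro h; exact absurd hj h
    rw [hB] at h0
    have := neg_eq_of_add_eq_zero_left h0
    rw [← this, v2_neg]
  -- part 1 : s ≤ k - r
  have hvle : span K2 (Set.range v) ≤ span K2 ((Bᶜ.image v : Finset V2) : Set V2) := by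
    rw [span_le]
    rintro _ ⟨i, rfl⟩
    by_cases hi : i ∈ B
    · rw [hK1 i hi]
      refine Submodule.sum_mem _ fun i' hi' => Submodule.smul_mem _ _ (subset_span ?_)
      exact Finset.mem_coe.mpr (Finset.mem_image_of_mem v hi')
    · exact subset_span (Finset.mem_coe.mpr
        (Finset.mem_image_of_mem v (Finset.mem_compl.mpr hi)))
  haveI : FiniteDimensional K2 (span K2 ((Bᶜ.image v : Finset V2) : Set V2)) :=
    FiniteDimensional.span_of_finite K2 (Finset.finite_toSet _)
  have hsle : finrank K2 (span K2 (Set.range v)) ≤ k - r := by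
    calc finrank K2 (span K2 (Set.range v))
        ≤ finrank K2 (span K2 ((Bᶜ.image v : Finset V2) : Set V2)) :=
          Submodule.finrank_mono hvle
      _ ≤ (Bᶜ.image v).card := finrank_span_finset_le_card _
      _ ≤ Bᶜ.card := Finset.card_image_le
      _ = k - r := by rw [Finset.card_compl, Fintype.card_fin, hBcard]
  have hrk : r ≤ k := by
    rw [← hBcard]
    simpa using Finset.card_le_univ B
  rcases Nat.even_or_odd k with hke | hko
  · have hke' := Nat.even_iff.mp hke
    omega
  · -- odd case
    have hko' := Nat.odd_iff.mp hko
    have h2k : 2 * (k / 2) = k - 1 := by omega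
    by_contra hcon
    push_neg at hcon
    set s := finrank K2 (span K2 (Set.range v)) with hsdef
    clear_value s
    have hseq : s = k - r := by omega
    -- the family (v i) for i ∈ Bᶜ is linearly independent
    have hli2 : LinearIndependent K2 (fun i : ↑(Bᶜ : Finset (Fin k)) => v i) := by
      rw [linearIndependent_iff_card_eq_finrank_span]
      have hrange : Set.range (fun i : ↑(Bᶜ : Finset (Fin k)) => v i)
          = ((Bᶜ.image v : Finset V2) : Set V2) := by
        ext w
        simp [Finset.mem_image]
      rw [hrange]
      have hle1 : s ≤ finrank K2 (span K2 ((Bᶜ.image v : Finset V2) : Set V2)) :=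
        hsdef ▸ Submodule.finrank_mono hvle
      have hle2 : finrank K2 (span K2 ((Bᶜ.image v : Finset V2) : Set V2)) ≤ Bᶜ.card :=
        (finrank_span_finset_le_card _).trans Finset.card_image_le
      have hBc : Bᶜ.card = k - r := by rw [Finset.card_compl, Fintype.card_fin, hBcard]
      have : finrank K2 (span K2 ((Bᶜ.image v : Finset V2) : Set V2)) = Bᶜ.card := by omega
      rw [Set.finrank, Fintype.card_coe, this]
    -- coefficient extraction
    have h3' : ∑ i ∈ Bᶜ, ((∑ j ∈ B, Ψ j (u i)) + 1) • v i = 0 := by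
      have hh := h3
      rw [← Finset.sum_add_sum_compl B v] at hh
      have hBv : ∑ j ∈ B, v j = ∑ i ∈ Bᶜ, (∑ j ∈ B, Ψ j (u i)) • v i := by
        rw [Finset.sum_congr rfl hK1, Finset.sum_comm]
        refine Finset.sum_congr rfl fun i _ => ?_
        rw [Finset.sum_smul]
      rw [hBv] at hh
      calc ∑ i ∈ Bᶜ, ((∑ j ∈ B, Ψ j (u i)) + 1) • v i
          = ∑ i ∈ Bᶜ, ((∑ j ∈ B, Ψ j (u i)) • v i + v i) := by
            refine Finset.sum_congr rfl fun i _ => ?_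
            rw [add_smul, one_smul]
        _ = ∑ i ∈ Bᶜ, (∑ j ∈ B, Ψ j (u i)) • v i + ∑ i ∈ Bᶜ, v i := Finset.sum_add_distrib
        _ = 0 := hh
    have hrow : ∀ i ∈ Bᶜ, ∑ j ∈ B, Ψ j (u i) = 1 := by
      intro i hi
      have hext := Fintype.linearIndependent_iff.mp hli2
        (fun i : ↑(Bᶜ : Finset (Fin k)) => (∑ j ∈ B, Ψ j (u i.1)) + 1) ?_ ⟨i, hi⟩
      · have h1' : (∑ j ∈ B, Ψ j (u i)) + 1 = 0 := hext
        have := k2_add_self (∑ j ∈ B, Ψ j (u i))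
        -- x + 1 = 0 → x = 1 in ZMod 2
        have hone : (1:K2) + 1 = 0 := by decide
        calc (∑ j ∈ B, Ψ j (u i)) = ((∑ j ∈ B, Ψ j (u i)) + 1) + 1 := by
              rw [add_assoc, hone, add_zero]
          _ = 1 := by rw [h1', zero_add]
      · rw [Finset.sum_coe_sort (Bᶜ) (fun i => ((∑ j ∈ B, Ψ j (u i)) + 1) • v i)]
        exact h3'
    have hcol : ∀ j ∈ B, ∑ i ∈ Bᶜ, Ψ j (u i) = 1 := by
      intro j hj
      have h2' : ∑ i, Ψ j (u i) = 0 := by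
        rw [← map_sum, h2, map_zero]
      rw [← Finset.sum_add_sum_compl B (fun i => Ψ j (u i))] at h2'
      have hBs : ∑ i ∈ B, Ψ j (u i) = 1 := by
        rw [Finset.sum_eq_single j]
        · rw [hΨδ j hj j hj, if_pos rfl]
        · intro i hi hne; rw [hΨδ j hj i hi, if_neg hne]
        · intro h; exact absurd hj h
      rw [hBs] at h2'
      have hone : (1:K2) + 1 = 0 := by decide
      calc (∑ i ∈ Bᶜ, Ψ j (u i)) = 1 + (1 + ∑ i ∈ Bᶜ, Ψ j (u i)) := by
            rw [← add_assoc, hone, zero_add]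
        _ = 1 := by rw [h2', add_zero]
    -- double counting
    have hdc : ((Bᶜ.card : ℕ) : K2) = ((B.card : ℕ) : K2) := by
      have h4 : ∑ i ∈ Bᶜ, ∑ j ∈ B, Ψ j (u i) = (Bᶜ.card : K2) := by
        rw [Finset.sum_congr rfl hrow]; simp
      have h5 : ∑ j ∈ B, ∑ i ∈ Bᶜ, Ψ j (u i) = (B.card : K2) := by
        rw [Finset.sum_congr rfl hcol]; simp
      rw [← h4, ← h5, Finset.sum_comm]
    have hBc : Bᶜ.card = k - r := by rw [Finset.card_compl, Fintype.card_fin, hBcard]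
    rw [hBc, hBcard] at hdc
    have hkz : ((k : ℕ) : K2) = 0 := by
      have hk' : (k - r) + r = k := by omega
      calc ((k:ℕ) : K2) = (((k - r) + r : ℕ) : K2) := by rw [hk']
        _ = ((k - r : ℕ) : K2) + ((r:ℕ) : K2) := by push_cast; ring
        _ = ((r:ℕ) : K2) + ((r:ℕ) : K2) := by rw [hdc]
        _ = 0 := k2_add_self _
    have : (2 : ℕ) ∣ k := by
      rwa [ZMod.natCast_eq_zero_iff] at hkz
    omega


open Fin.NatCast Fin.CommRing in
lemma distinct_bound {k : ℕ} [NeZero k] (a : Fin k → ℕ) (u : Fin k → V2)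
    (hu : ∀ i, u i = Finsupp.single (a i) 1 + Finsupp.single (a (i+1)) 1) :
    numDistinct a ≤ finrank K2 (span K2 (Set.range u)) + 1 := by
  classical
  set E' := span K2 (Set.range u) ⊔ span K2 {Finsupp.single (a 0) (1:K2)} with hE'
  have hmem : ∀ i : Fin k, Finsupp.single (a i) (1:K2) ∈ E' := by
    have key : ∀ n : ℕ, Finsupp.single (a ((n : Fin k))) (1:K2) ∈ E' := by
      intro n
      induction n with
      | zero =>
        rw [Nat.cast_zero]
        exact le_sup_right (α := Submodule K2 V2) (Submodule.mem_span_singleton_self _)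
      | succ n ih =>
        have hcast : ((n + 1 : ℕ) : Fin k) = (n : Fin k) + 1 := by push_cast; ring
        have hstep : Finsupp.single (a ((n : Fin k) + 1)) (1:K2)
            = u (n : Fin k) + Finsupp.single (a ((n : Fin k))) 1 := by
          rw [hu]
          rw [add_assoc, add_comm (Finsupp.single (a ((n:Fin k)+1)) (1:K2)), ← add_assoc,
            v2_add_self, zero_add]
        rw [hcast, hstep]
        exact Submodule.add_mem _ (le_sup_left (α := Submodule K2 V2)
          (subset_span (Set.mem_range_self _))) ih
    intro i
    have := key i.val
    rwa [Fin.cast_val_eq_self] at this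
  have hli : LinearIndependent K2
      (fun x : (Finset.univ.image a : Finset ℕ) => Finsupp.single (x : ℕ) (1:K2)) := by
    have hb := (Finsupp.basisSingleOne (R := K2) (ι := ℕ)).linearIndependent
    have := hb.comp (fun x : (Finset.univ.image a : Finset ℕ) => (x : ℕ))
      Subtype.coe_injective
    simpa [Finsupp.coe_basisSingleOne, Function.comp_def] using this
  have hcard : numDistinct a
      = finrank K2 (span K2 (Set.range
        (fun x : (Finset.univ.image a : Finset ℕ) => Finsupp.single (x : ℕ) (1:K2)))) := by
    rw [finrank_span_eq_card hli, Fintype.card_coe]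
    rfl
  haveI : FiniteDimensional K2 E' := by
    rw [hE']
    haveI : FiniteDimensional K2 (span K2 (Set.range u)) :=
      FiniteDimensional.span_of_finite K2 (Set.finite_range u)
    haveI : FiniteDimensional K2 (span K2 {Finsupp.single (a 0) (1:K2)}) :=
      FiniteDimensional.span_of_finite K2 (Set.finite_singleton _)
    infer_instance
  have hle : finrank K2 (span K2 (Set.range
      (fun x : (Finset.univ.image a : Finset ℕ) => Finsupp.single (x : ℕ) (1:K2))))
      ≤ finrank K2 E' := by
    apply Submodule.finrank_mono
    rw [span_le]
    rintro _ ⟨x, rfl⟩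
    obtain ⟨i, _, hi⟩ := Finset.mem_image.mp x.2
    show Finsupp.single (x : ℕ) (1:K2) ∈ (E' : Set V2)
    rw [← hi]
    exact hmem i
  have hsup : finrank K2 E' ≤ finrank K2 (span K2 (Set.range u)) + 1 := by
    haveI : FiniteDimensional K2 (span K2 (Set.range u)) :=
      FiniteDimensional.span_of_finite K2 (Set.finite_range u)
    haveI : FiniteDimensional K2 (span K2 {Finsupp.single (a 0) (1:K2)}) :=
      FiniteDimensional.span_of_finite K2 (Set.finite_singleton _)
    have h1 : finrank K2 (span K2 {Finsupp.single (a 0) (1:K2)}) ≤ 1 := by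
      have := finrank_span_le_card (R := K2) ({Finsupp.single (a 0) (1:K2)} : Set V2)
      simpa using this
    calc finrank K2 E'
        ≤ finrank K2 (span K2 (Set.range u))
          + finrank K2 (span K2 {Finsupp.single (a 0) (1:K2)}) :=
          Submodule.finrank_add_le_finrank_add_finrank _ _
      _ ≤ finrank K2 (span K2 (Set.range u)) + 1 := Nat.add_le_add_left h1 _
  rw [hcard]
  exact hle.trans hsup


section trans
variable {k : ℕ} [NeZero k] (a b c : Fin k → ℕ)

lemma hpair (hm : TripleMatching a b c) (x y : ℕ) :
    ((Finset.univ.filter (fun q : Fin k × Bool =>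
      (tlist a b c q).1 = x ∧ (tlist a b c q).2.1 = y)).card : K2) = 0 := by
  classical
  set F := Finset.univ.filter (fun q : Fin k × Bool =>
    (tlist a b c q).1 = x ∧ (tlist a b c q).2.1 = y) with hF
  have hcard : F.card = ∑ z ∈ F.image (fun q => (tlist a b c q).2.2),
      (F.filter (fun q => (tlist a b c q).2.2 = z)).card :=
    Finset.card_eq_sum_card_fiberwise (fun q hq => Finset.mem_image_of_mem _ hq)
  rw [hcard, Nat.cast_sum]
  apply Finset.sum_eq_zero
  intro z _
  have heq : F.filter (fun q => (tlist a b c q).2.2 = z)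
      = Finset.univ.filter (fun q => tlist a b c q = (x, y, z)) := by
    ext q
    simp only [hF, Finset.mem_filter, Finset.mem_univ, true_and, Prod.ext_iff, and_assoc]
  rw [heq]
  have hev := hm (x, y, z)
  rw [Nat.card_eq_fintype_card, Fintype.card_subtype] at hev
  obtain ⟨m, hm2⟩ := hev
  rw [hm2]
  push_cast
  rw [show ((m : K2) + m) = 2 * m by ring, show (2:K2) = 0 from rfl, zero_mul]

lemma hscal (hm : TripleMatching a b c) (x y : ℕ) :
    ∑ i : Fin k, ((if a i = x then (1:K2) else 0) + (if a (i+1) = x then 1 else 0))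
      * ((if b i = y then (1:K2) else 0) + (if b (i+1) = y then 1 else 0)) = 0 := by
  classical
  have hsplit : ∀ i : Fin k,
      ((if a i = x then (1:K2) else 0) + (if a (i+1) = x then 1 else 0))
      * ((if b i = y then (1:K2) else 0) + (if b (i+1) = y then 1 else 0))
      = ((if a i = x ∧ b i = y then (1:K2) else 0)
          + (if a (i+1) = x ∧ b (i+1) = y then 1 else 0))
        + ((if a i = x ∧ b (i+1) = y then (1:K2) else 0)
          + (if a (i+1) = x ∧ b i = y then 1 else 0)) := by
    intro i
    by_cases h1 : a i = x <;> by_cases h2 : a (i+1) = x <;>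
      by_cases h3 : b i = y <;> by_cases h4 : b (i+1) = y <;>
      simp [h1, h2, h3, h4] <;> decide
  rw [Finset.sum_congr rfl (fun i _ => hsplit i), Finset.sum_add_distrib]
  have hdiag : ∑ i : Fin k, ((if a i = x ∧ b i = y then (1:K2) else 0)
      + (if a (i+1) = x ∧ b (i+1) = y then 1 else 0)) = 0 := by
    rw [Finset.sum_add_distrib]
    have hre : ∑ i : Fin k, (if a (i+1) = x ∧ b (i+1) = y then (1:K2) else 0)
        = ∑ i : Fin k, (if a i = x ∧ b i = y then (1:K2) else 0) :=
      Fintype.sum_equiv (Equiv.addRight (1 : Fin k))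
        (fun i => if a (i+1) = x ∧ b (i+1) = y then (1:K2) else 0)
        (fun i => if a i = x ∧ b i = y then (1:K2) else 0)
        (fun i => rfl)
    rw [hre, show ∀ t : K2, t + t = 0 from fun t => by
      rw [show t + t = 2 * t by ring, show (2:K2) = 0 from rfl, zero_mul]]
  have hcross : ∑ i : Fin k, ((if a i = x ∧ b (i+1) = y then (1:K2) else 0)
      + (if a (i+1) = x ∧ b i = y then 1 else 0)) = 0 := by
    have hagree : ∑ i : Fin k, ((if a i = x ∧ b (i+1) = y then (1:K2) else 0)
        + (if a (i+1) = x ∧ b i = y then 1 else 0))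
        = ∑ q : Fin k × Bool,
            (if (tlist a b c q).1 = x ∧ (tlist a b c q).2.1 = y then (1:K2) else 0) := by
      rw [Fintype.sum_prod_type]
      refine Finset.sum_congr rfl fun i _ => ?_
      rw [Fintype.sum_bool, add_comm]
      simp [tlist]
    rw [hagree, Finset.sum_boole]
    exact hpair a b c hm x y
  rw [hdiag, hcross, add_zero]

end trans

end helpers

open Finsupp Submodule Module Finset in
/-- If `(a,b,c)` satisfies the triple matching condition with `(a,b)`
non-repeating, then `#a + #b ≤ 2(⌊k/2⌋ + 1)`. -/
theorem numDistinct_a_add_b_bound {k : ℕ} [NeZero k] (a b c : Fin k → ℕ)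
    (hm : TripleMatching a b c) (hnr : NonRepeating a b) :
    numDistinct a + numDistinct b ≤ 2 * (k / 2 + 1) := by
  classical
  set u : Fin k → V2 := fun i => Finsupp.single (a i) 1 + Finsupp.single (a (i+1)) 1 with hudef
  set v : Fin k → V2 := fun i => Finsupp.single (b i) 1 + Finsupp.single (b (i+1)) 1 with hvdef
  have h1 : ∀ x : ℕ, ∑ i, u i x • v i = 0 := by
    intro x
    ext y
    rw [Finsupp.finset_sum_apply]
    have hterm : ∀ i : Fin k, (u i x • v i) y = u i x * v i y := fun i => by
      rw [Finsupp.smul_apply, smul_eq_mul]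
    rw [Finset.sum_congr rfl fun i _ => hterm i]
    have hux : ∀ i : Fin k, u i x
        = (if a i = x then (1:K2) else 0) + (if a (i+1) = x then 1 else 0) := fun i => by
      simp [hudef, Finsupp.single_apply]
    have hvy : ∀ i : Fin k, v i y
        = (if b i = y then (1:K2) else 0) + (if b (i+1) = y then 1 else 0) := fun i => by
      simp [hvdef, Finsupp.single_apply]
    rw [Finset.sum_congr rfl fun i _ => by rw [hux i, hvy i]]
    rw [hscal a b c hm x y]
    simp
  have h2 : ∑ i, u i = 0 := by
    have hrw : ∀ i : Fin k, u i
        = Finsupp.single (a i) (1:K2) + Finsupp.single (a (i+1)) 1 := fun i => rfl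
    rw [Finset.sum_congr rfl fun i _ => hrw i, Finset.sum_add_distrib]
    have hre : ∑ i : Fin k, Finsupp.single (a (i+1)) (1:K2)
        = ∑ i : Fin k, Finsupp.single (a i) (1:K2) :=
      Fintype.sum_equiv (Equiv.addRight (1 : Fin k)) _ _ (fun i => by simp)
    rw [hre, v2_add_self]
  have h3 : ∑ i, v i = 0 := by
    have hrw : ∀ i : Fin k, v i
        = Finsupp.single (b i) (1:K2) + Finsupp.single (b (i+1)) 1 := fun i => rfl
    rw [Finset.sum_congr rfl fun i _ => hrw i, Finset.sum_add_distrib]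
    have hre : ∑ i : Fin k, Finsupp.single (b (i+1)) (1:K2)
        = ∑ i : Fin k, Finsupp.single (b i) (1:K2) :=
      Fintype.sum_equiv (Equiv.addRight (1 : Fin k)) _ _ (fun i => by simp)
    rw [hre, v2_add_self]
  have hA := lemA u v h1 h2 h3
  have ha := distinct_bound a u (fun i => rfl)
  have hb := distinct_bound b v (fun i => rfl)
  omega
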